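/- Define σ∞ = ⋃_{n ∈ ℕ} ⋃_{k,l ∈ {±1}^n} spec(A^{k,l}_fin), where A^{k,l}_fin ∈ ℂ^{(n+1)×(n+1)} is tridiagonal with zero diagonal, subdiagonal k, superdiagonal l. For every m ≥ 1 and k ∈ {±1}^m with ∏ k_j = 1, with p the polynomial satisfying det(a^k(φ) − λI) = (−1)^m(p(λ) − 2cos φ), the set p⁻¹([−2,2]) is contained in the closure of σ∞. -/

import Mathlib

open Complex Matrix

/-- The symbol matrix `a^k(φ) ∈ ℂ^{m×m}` of an `m`-periodic tridiagonal sign operator: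
superdiagonal entries `1`, subdiagonal entries `k₁,…,k_{m-1}` (here `k 0, …, k (m-2)`),
corner entries `k_m e^{iφ}` at position `(1,m)` and `e^{-iφ}` at position `(m,1)`.
The entries are defined as sums so that for small `m` overlapping positions add up
(e.g. for `m = 1` the matrix is `(k₁ e^{iφ} + e^{-iφ})`). -/
noncomputable def symb (m : ℕ) (k : ℕ → ℂ) (φ : ℝ) : Matrix (Fin m) (Fin m) ℂ :=
  Matrix.of fun r c =>
    (if (c : ℕ) = (r : ℕ) + 1 then 1 else 0) +
    (if (r : ℕ) = (c : ℕ) + 1 then k c else 0) +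
    (if (r : ℕ) = 0 ∧ (c : ℕ) = m - 1 then k c * Complex.exp (φ * Complex.I) else 0) +
    (if (r : ℕ) = m - 1 ∧ (c : ℕ) = 0 then Complex.exp (-φ * Complex.I) else 0)

/-- The finite tridiagonal matrix `A^{k,l} ∈ ℂ^{(n+1)×(n+1)}` with subdiagonal entries
`k₁,…,kₙ` (here `k 0, …, k (n-1)`), superdiagonal entries `l₁,…,lₙ`, zeros elsewhere. -/
def Afin (n : ℕ) (k l : ℕ → ℂ) : Matrix (Fin (n + 1)) (Fin (n + 1)) ℂ :=
  Matrix.of fun i j =>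
    if (j : ℕ) = (i : ℕ) + 1 then l i else if (i : ℕ) = (j : ℕ) + 1 then k j else 0

/-- The set `σ∞` of all eigenvalues of finite tridiagonal sign matrices. -/
noncomputable def sigmaInf : Set ℂ :=
  {lam : ℂ | ∃ n : ℕ, 1 ≤ n ∧ ∃ k l : ℕ → ℂ,
    (∀ i < n, k i = 1 ∨ k i = -1) ∧ (∀ i < n, l i = 1 ∨ l i = -1) ∧
    lam ∈ spectrum ℂ (Afin n k l)}

namespace St15

lemma fin_sum_pin {m : ℕ} (j : ℕ) (hj : j < m) (f : Fin m → ℂ) :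
    (∑ c : Fin m, if (c : ℕ) = j then f c else 0) = f ⟨j, hj⟩ := by
  rw [Finset.sum_eq_single (⟨j, hj⟩ : Fin m)]
  · simp
  · intro b _ hb; exact if_neg (fun h => hb (Fin.ext h))
  · intro h; exact absurd (Finset.mem_univ _) h

lemma fin_sum_pin0 {m : ℕ} (j : ℕ) (hj : m ≤ j) (f : Fin m → ℂ) :
    (∑ c : Fin m, if (c : ℕ) = j then f c else 0) = 0 := by
  apply Finset.sum_eq_zero
  intro b _
  exact if_neg (fun h => absurd (h ▸ b.isLt) (by omega))

lemma symb_row {m : ℕ} (k : ℕ → ℂ) (φ : ℝ) (v : Fin m → ℂ) (lam : ℂ)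
    (hEig : (symb m k φ).mulVec v = lam • v) (r : Fin m) :
    (∑ c : Fin m, if (c : ℕ) = (r : ℕ) + 1 then v c else 0)
    + (∑ c : Fin m, if (r : ℕ) = (c : ℕ) + 1 then k c * v c else 0)
    + (∑ c : Fin m, if (r : ℕ) = 0 ∧ (c : ℕ) = m - 1 then
        k c * Complex.exp (φ * Complex.I) * v c else 0)
    + (∑ c : Fin m, if (r : ℕ) = m - 1 ∧ (c : ℕ) = 0 then
        Complex.exp (-φ * Complex.I) * v c else 0) = lam * v r := by
  have h := congrFun hEig r
  simp only [Matrix.mulVec, dotProduct, symb, Matrix.of_apply, Pi.smul_apply,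
    smul_eq_mul, add_mul, ite_mul, zero_mul, one_mul] at h
  rw [← h, Finset.sum_add_distrib, Finset.sum_add_distrib, Finset.sum_add_distrib]



noncomputable def M2 (lam s : ℂ) : Matrix (Fin 2) (Fin 2) ℂ := !![lam, -s; 1, 0]

noncomputable def Qm (lam : ℂ) (c : ℕ → ℂ) (a : ℕ) : ℕ → Matrix (Fin 2) (Fin 2) ℂ
  | 0 => 1
  | j+1 => M2 lam (c (a+j)) * Qm lam c a j

lemma det_M2 (lam s : ℂ) : (M2 lam s).det = s := by
  simp [M2, Matrix.det_fin_two_of]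

lemma CH2 (X : Matrix (Fin 2) (Fin 2) ℂ) :
    X * X = X.trace • X - X.det • (1 : Matrix (Fin 2) (Fin 2) ℂ) := by
  ext i j
  fin_cases i <;> fin_cases j <;>
    simp [Matrix.mul_apply, Fin.sum_univ_two, Matrix.trace_fin_two, Matrix.det_fin_two,
      Matrix.one_apply] <;> ring

lemma Qm_succ_left (lam : ℂ) (c : ℕ → ℂ) (a j : ℕ) :
    Qm lam c a (j+1) = Qm lam c (a+1) j * M2 lam (c a) := by
  induction j with
  | zero => simp [Qm]
  | succ j ih =>
      have : Qm lam c a (j+1+1) = M2 lam (c (a+(j+1))) * Qm lam c a (j+1) := rfl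
      rw [this, ih]
      have : Qm lam c (a+1) (j+1) = M2 lam (c (a+1+j)) * Qm lam c (a+1) j := rfl
      rw [this, ← mul_assoc]
      have e : a + (j+1) = a+1+j := by omega
      rw [e]

lemma Qm_congr (lam : ℂ) (c c' : ℕ → ℂ) (a a' j : ℕ)
    (h : ∀ i < j, c (a+i) = c' (a'+i)) : Qm lam c a j = Qm lam c' a' j := by
  induction j with
  | zero => rfl
  | succ j ih =>
      show M2 lam (c (a+j)) * Qm lam c a j = M2 lam (c' (a'+j)) * Qm lam c' a' j
      rw [h j (by omega), ih (fun i hi => h i (by omega))]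

lemma det_Qm (lam : ℂ) (c : ℕ → ℂ) (a j : ℕ) :
    (Qm lam c a j).det = ∏ i ∈ Finset.range j, c (a+i) := by
  induction j with
  | zero => simp [Qm]
  | succ j ih =>
      show ((M2 lam (c (a+j))) * Qm lam c a j).det = _
      rw [Matrix.det_mul, det_M2, ih, Finset.prod_range_succ]
      ring

lemma walk (lam : ℂ) (c : ℕ → ℂ) (w : ℕ → Fin 2 → ℂ)
    (hw : ∀ n, w (n+1) = (M2 lam (c n)).mulVec (w n)) :
    ∀ a j, w (a+j) = (Qm lam c a j).mulVec (w a) := by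
  intro a j
  induction j with
  | zero => simp [Qm]
  | succ j ih =>
      have : a + (j+1) = (a+j) + 1 := by omega
      rw [this, hw (a+j), ih]
      show _ = (M2 lam (c (a+j)) * Qm lam c a j).mulVec (w a)
      rw [← Matrix.mulVec_mulVec]

lemma trace_Qm_step (lam : ℂ) (c : ℕ → ℂ) (m a : ℕ)
    (hper : c (a+m) = c a) (hne : c a ≠ 0) :
    (Qm lam c (a+1) m).trace = (Qm lam c a m).trace := by
  have h1 : Qm lam c a (m+1) = Qm lam c (a+1) m * M2 lam (c a) := Qm_succ_left lam c a m
  have h2 : Qm lam c a (m+1) = M2 lam (c a) * Qm lam c a m := by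
    show M2 lam (c (a+m)) * Qm lam c a m = _
    rw [hper]
  set B := M2 lam (c a) with hB
  have hdet : IsUnit B.det := by rw [hB, det_M2]; exact hne.isUnit
  have hBinv : B * B⁻¹ = 1 := Matrix.mul_nonsing_inv B hdet
  have hBinv' : B⁻¹ * B = 1 := Matrix.nonsing_inv_mul B hdet
  have h3 : Qm lam c (a+1) m = B * Qm lam c a m * B⁻¹ := by
    have := h1.symm.trans h2
    calc Qm lam c (a+1) m = Qm lam c (a+1) m * (B * B⁻¹) := by rw [hBinv, mul_one]
    _ = (Qm lam c (a+1) m * B) * B⁻¹ := by rw [mul_assoc]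
    _ = B * Qm lam c a m * B⁻¹ := by rw [← this]
  rw [h3, Matrix.trace_mul_comm, ← mul_assoc, hBinv', one_mul]

lemma trace_Qm_const (lam : ℂ) (c : ℕ → ℂ) (m : ℕ)
    (hper : ∀ n, c (n+m) = c n) (hne : ∀ n, c n ≠ 0) :
    ∀ a, (Qm lam c a m).trace = (Qm lam c 0 m).trace := by
  intro a
  induction a with
  | zero => rfl
  | succ a ih => rw [trace_Qm_step lam c m a (hper a) (hne a), ih]



noncomputable def eseq (lam : ℂ) (c : ℕ → ℂ) : ℕ → ℂ
  | 0 => 0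
  | 1 => 1
  | n+2 => lam * eseq lam c (n+1) - c n * eseq lam c n

lemma eseq_step (lam : ℂ) (c : ℕ → ℂ) (n : ℕ) :
    ![eseq lam c (n+2), eseq lam c (n+1)] =
      (!![lam, -(c n); 1, 0] : Matrix (Fin 2) (Fin 2) ℂ).mulVec
        ![eseq lam c (n+1), eseq lam c n] := by
  funext i
  fin_cases i <;>
    simp [Matrix.mulVec, dotProduct, Fin.sum_univ_two, eseq] <;> ring

/-- factorization through u: if y 0 = 0 and y (j+2) = D y (j+1) - y j then y j = y 1 * u j -/
lemma cheb_factor (D : ℂ) (y : ℕ → ℂ) (h0 : y 0 = 0)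
    (hrec : ∀ j, y (j+2) = D * y (j+1) - y j) :
    ∀ j, y j = y 1 * eseq D (fun _ => 1) j := by
  have key : ∀ j, y j = y 1 * eseq D (fun _ => 1) j ∧
      y (j+1) = y 1 * eseq D (fun _ => 1) (j+1) := by
    intro j
    induction j with
    | zero => constructor <;> simp [eseq, h0]
    | succ j ih =>
        refine ⟨ih.2, ?_⟩
        have : eseq D (fun _ => 1) (j+2) = D * eseq D (fun _ => 1) (j+1)
            - eseq D (fun _ => 1) j := by simp [eseq]
        rw [hrec j, this, ih.1, ih.2]; ring
  exact fun j => (key j).1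

lemma cheb_sin (θ : ℝ) :
    ∀ j : ℕ, eseq (2 * (Real.cos θ : ℂ)) (fun _ => 1) j * (Real.sin θ : ℂ)
      = (Real.sin (j * θ) : ℂ) := by
  have key : ∀ j : ℕ, (2 : ℝ) * Real.cos θ * Real.sin ((j+1) * θ) - Real.sin (j * θ)
      = Real.sin ((j+2) * θ) := by
    intro j
    have h1 : ((j:ℝ)+2) * θ = ((j:ℝ)+1) * θ + θ := by ring
    have h2 : (j:ℝ) * θ = ((j:ℝ)+1) * θ - θ := by ring
    rw [h1, h2, Real.sin_add, Real.sin_sub]; ring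
  have main : ∀ j : ℕ, eseq (2 * (Real.cos θ : ℂ)) (fun _ => 1) j * (Real.sin θ : ℂ)
      = (Real.sin (j * θ) : ℂ) ∧
      eseq (2 * (Real.cos θ : ℂ)) (fun _ => 1) (j+1) * (Real.sin θ : ℂ)
      = (Real.sin ((j+1) * θ) : ℂ) := by
    intro j
    induction j with
    | zero => constructor <;> simp [eseq]
    | succ j ih =>
        constructor
        · have h := ih.2; push_cast at h ⊢; exact h
        have hs : eseq (2 * (Real.cos θ : ℂ)) (fun _ => 1) (j+2)
            = 2 * (Real.cos θ : ℂ) * eseq (2 * (Real.cos θ : ℂ)) (fun _ => 1) (j+1)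
              - eseq (2 * (Real.cos θ : ℂ)) (fun _ => 1) j := by simp [eseq]
        rw [hs, sub_mul, mul_assoc, ih.1, ih.2]
        have := key j
        have hc : ((Real.sin ((j+2) * θ) : ℝ) : ℂ)
            = 2 * (Real.cos θ : ℂ) * (Real.sin ((j+1) * θ) : ℂ) - (Real.sin (j * θ) : ℂ) := by
          rw [← this]; push_cast; ring
        rw [← hc]
        push_cast
        ring_nf
  exact fun j => (main j).1


lemma psi_rec (m : ℕ) (hm : 0 < m) (k : ℕ → ℂ) (φ : ℝ) (lam : ℂ) (v : Fin m → ℂ)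
    (hEig : (symb m k φ).mulVec v = lam • v)
    (ψ : ℕ → ℂ)
    (hψ : ∀ n, ψ n = (Complex.exp (-φ * Complex.I))^(n / m) * v ⟨n % m, Nat.mod_lt n hm⟩) :
    ∀ n, ψ (n+2) = lam * ψ (n+1) - k (n % m) * ψ n := by
  set z := Complex.exp (-φ * Complex.I) with hz
  have hz1 : z * Complex.exp (φ * Complex.I) = 1 := by
    rw [hz, ← Complex.exp_add]; norm_num
  have hψs : ∀ n, ψ (n+m) = z * ψ n := by
    intro n
    rw [hψ, hψ]
    simp only [Nat.add_div_right n hm, Nat.add_mod_right, pow_succ]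
    ring
  have hψlt : ∀ (j : ℕ) (h : j < m), ψ j = v ⟨j, h⟩ := by
    intro j h
    rw [hψ]
    simp [Nat.div_eq_of_lt h, Nat.mod_eq_of_lt h]
  have base : ∀ n, n < m → ψ (n+2) = lam * ψ (n+1) - k n * ψ n := by
    intro n hn
    rcases lt_trichotomy (n+2) m with h2 | h2 | h2
    · -- interior row n+1
      have hr := symb_row k φ v lam hEig ⟨n+1, by omega⟩
      rw [fin_sum_pin (n+2) h2] at hr
      rw [show (∑ c : Fin m, if ((⟨n+1, by omega⟩ : Fin m) : ℕ) = (c : ℕ) + 1 then k c * v c else 0)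
          = ∑ c : Fin m, if (c : ℕ) = n then k (c : ℕ) * v c else 0 from
        Finset.sum_congr rfl (fun c _ => if_congr (by simp only [Fin.val_mk]; omega) rfl rfl)] at hr
      rw [fin_sum_pin n (by omega)] at hr
      rw [Finset.sum_eq_zero (fun c _ => if_neg (by simp only [Fin.val_mk]; omega)),
        Finset.sum_eq_zero (fun c _ => if_neg (by simp only [Fin.val_mk]; omega))] at hr
      rw [hψlt (n+2) h2, hψlt (n+1) (by omega), hψlt n hn]
      simp only [Fin.val_mk] at hr
      linear_combination hr
    · -- last row (n+1 = m-1), uses e^{-iφ} corner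
      have hr := symb_row k φ v lam hEig ⟨n+1, by omega⟩
      rw [fin_sum_pin0 (n+2) (by omega)] at hr
      rw [show (∑ c : Fin m, if ((⟨n+1, by omega⟩ : Fin m) : ℕ) = (c : ℕ) + 1 then k c * v c else 0)
          = ∑ c : Fin m, if (c : ℕ) = n then k (c : ℕ) * v c else 0 from
        Finset.sum_congr rfl (fun c _ => if_congr (by simp only [Fin.val_mk]; omega) rfl rfl)] at hr
      rw [fin_sum_pin n (by omega)] at hr
      rw [Finset.sum_eq_zero (fun c _ => if_neg (by simp only [Fin.val_mk]; omega))] at hr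
      rw [show (∑ c : Fin m, if ((⟨n+1, by omega⟩ : Fin m) : ℕ) = m - 1 ∧ (c : ℕ) = 0 then
            Complex.exp (-φ * Complex.I) * v c else 0)
          = ∑ c : Fin m, if (c : ℕ) = 0 then z * v c else 0 from
        Finset.sum_congr rfl (fun c _ => if_congr (by simp only [Fin.val_mk]; omega) rfl rfl)] at hr
      rw [fin_sum_pin 0 (by omega)] at hr
      have hm2 : ψ (n+2) = z * ψ 0 := by rw [show n+2 = 0+m by omega, hψs]
      rw [hm2, hψlt (n+1) (by omega), hψlt n hn, hψlt 0 (by omega)]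
      simp only [Fin.val_mk] at hr
      linear_combination hr
    · -- n+1 = m : row 0
      have hnm : n+1 = m := by omega
      rcases Nat.eq_or_lt_of_le hm with hm1 | hm2
      · -- m = 1, n = 0
        have hn0 : n = 0 := by omega
        have hr := symb_row k φ v lam hEig ⟨0, hm⟩
        rw [fin_sum_pin0 1 (by omega)] at hr
        rw [Finset.sum_eq_zero (fun c _ => if_neg (by simp only [Fin.val_mk]; omega))] at hr
        rw [show (∑ c : Fin m, if ((⟨0, hm⟩ : Fin m) : ℕ) = 0 ∧ (c : ℕ) = m - 1 then
              k c * Complex.exp (φ * Complex.I) * v c else 0)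
            = ∑ c : Fin m, if (c : ℕ) = 0 then k (c:ℕ) * Complex.exp (φ * Complex.I) * v c else 0
          from Finset.sum_congr rfl (fun c _ => if_congr
            (by simp only [Fin.val_mk]
                constructor
                · rintro ⟨-, h'⟩; omega
                · intro h'; exact ⟨by first | trivial | omega, by first | trivial | omega⟩) rfl rfl)] at hr
        rw [show (∑ c : Fin m, if ((⟨0, hm⟩ : Fin m) : ℕ) = m - 1 ∧ (c : ℕ) = 0 then
              Complex.exp (-φ * Complex.I) * v c else 0)
            = ∑ c : Fin m, if (c : ℕ) = 0 then z * v c else 0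
          from Finset.sum_congr rfl (fun c _ => if_congr
            (by simp only [Fin.val_mk]
                constructor
                · rintro ⟨-, h'⟩; omega
                · intro h'; exact ⟨by first | trivial | omega, by first | trivial | omega⟩) rfl rfl)] at hr
        rw [fin_sum_pin 0 hm, fin_sum_pin 0 hm] at hr
        subst hn0
        have e2 : ψ 2 = z * ψ 1 := by rw [show 2 = 1 + m by omega, hψs]
        have e1 : ψ 1 = z * ψ 0 := by rw [show 1 = 0 + m by omega, hψs]
        rw [e2, e1, hψlt 0 hm]
        simp only [Fin.val_mk] at hr
        linear_combination z * hr - k 0 * v ⟨0, hm⟩ * hz1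
      · -- m ≥ 2, row 0
        have hr := symb_row k φ v lam hEig ⟨0, hm⟩
        rw [fin_sum_pin 1 hm2] at hr
        rw [Finset.sum_eq_zero (fun c _ => if_neg (by simp only [Fin.val_mk]; omega))] at hr
        rw [show (∑ c : Fin m, if ((⟨0, hm⟩ : Fin m) : ℕ) = 0 ∧ (c : ℕ) = m - 1 then
              k c * Complex.exp (φ * Complex.I) * v c else 0)
            = ∑ c : Fin m, if (c : ℕ) = m-1 then k (c:ℕ) * Complex.exp (φ * Complex.I) * v c else 0
          from Finset.sum_congr rfl (fun c _ => if_congr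
            (by simp only [Fin.val_mk]
                constructor
                · rintro ⟨-, h'⟩; omega
                · intro h'; exact ⟨by first | trivial | omega, by first | trivial | omega⟩) rfl rfl)] at hr
        rw [fin_sum_pin (m-1) (by omega)] at hr
        rw [Finset.sum_eq_zero (fun c _ => if_neg
          (by simp only [Fin.val_mk]; rintro ⟨h1', h2'⟩; omega))] at hr
        have e2 : ψ (n+2) = z * ψ 1 := by rw [show n+2 = 1 + m by omega, hψs]
        have e1 : ψ (n+1) = z * ψ 0 := by rw [show n+1 = 0 + m by omega, hψs]
        rw [e2, e1, hψlt 0 hm, hψlt 1 hm2, hψlt n hn]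
        simp only [Fin.val_mk] at hr
        have hnm1 : n = m - 1 := by omega
        subst hnm1
        linear_combination z * hr - k (m-1) * v ⟨m-1, by omega⟩ * hz1
  -- extend by periodicity
  intro n
  induction n using Nat.strong_induction_on with
  | _ n ih =>
    rcases lt_or_ge n m with h | h
    · rw [Nat.mod_eq_of_lt h]; exact base n h
    · have hn' : n - m < n := by omega
      have hrec := ih (n - m) hn'
      have h1 : n + 2 = (n - m + 2) + m := by omega
      have h2 : n + 1 = (n - m + 1) + m := by omega
      have h3 : n = (n - m) + m := by omega
      have h4 : n % m = (n - m) % m := by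
        conv_lhs => rw [h3]
        rw [Nat.add_mod_right]
      calc ψ (n+2) = z * ψ (n - m + 2) := by rw [h1, hψs]
        _ = z * (lam * ψ (n - m + 1) - k ((n-m) % m) * ψ (n - m)) := by rw [hrec]
        _ = lam * (z * ψ (n - m + 1)) - k ((n-m) % m) * (z * ψ (n - m)) := by ring
        _ = lam * ψ (n+1) - k (n % m) * ψ n := by
              rw [← hψs, ← h2, ← hψs, ← h3, h4]

lemma M2_vec_10 (lam s : ℂ) : (M2 lam s).mulVec ![1, 0] = ![lam, 1] := by
  funext i
  fin_cases i <;> simp [M2, Matrix.mulVec, dotProduct, Fin.sum_univ_two]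

lemma mem_sigmaInf (m : ℕ) (hm : 0 < m) (k : ℕ → ℂ)
    (hk : ∀ i < m, k i = 1 ∨ k i = -1)
    (hprod : ∏ j ∈ Finset.range m, k j = 1)
    (N l : ℕ) (hN : 3 ≤ N) (hl0 : 0 < l) (hlN : l < N) (lam : ℂ)
    (hdet0 : (symb m k (Real.pi * l / N) - lam • (1 : Matrix (Fin m) (Fin m) ℂ)).det = 0) :
    lam ∈ sigmaInf := by
  set θ : ℝ := Real.pi * l / N with hθ
  obtain ⟨v, hv0, hv⟩ := (Matrix.exists_mulVec_eq_zero_iff).2 hdet0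
  have hEig : (symb m k θ).mulVec v = lam • v := by
    rw [Matrix.sub_mulVec, Matrix.smul_mulVec, Matrix.one_mulVec, sub_eq_zero] at hv
    exact hv
  set z := Complex.exp (-(θ:ℂ) * Complex.I) with hzdef
  have hzne : z ≠ 0 := Complex.exp_ne_zero _
  set K : ℕ → ℂ := fun n => k (n % m) with hKdef
  have hKper : ∀ n, K (n + m) = K n := by
    intro n; show k ((n+m) % m) = k (n % m); rw [Nat.add_mod_right]
  have hKperN : ∀ (t x : ℕ), K (x + t * m) = K x := by
    intro t
    induction t with
    | zero => intro x; simp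
    | succ t ih =>
        intro x
        have : x + (t+1) * m = (x + t * m) + m := by ring
        rw [this, hKper, ih]
  have hKsign : ∀ n, K n = 1 ∨ K n = -1 := fun n => hk _ (Nat.mod_lt n hm)
  have hKne : ∀ n, K n ≠ 0 := by
    intro n
    rcases hKsign n with h | h <;> rw [h] <;> norm_num
  set ψ : ℕ → ℂ := fun n => z ^ (n / m) * v ⟨n % m, Nat.mod_lt n hm⟩ with hψdef
  have hR : ∀ n, ψ (n+2) = lam * ψ (n+1) - K n * ψ n :=
    psi_rec m hm k θ lam v hEig ψ (fun n => rfl)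
  have hψs : ∀ n, ψ (n+m) = z * ψ n := by
    intro n
    show z ^ ((n+m) / m) * _ = z * (z ^ (n / m) * _)
    simp only [Nat.add_div_right n hm, Nat.add_mod_right, pow_succ]
    ring
  -- transfer for ψ
  set w : ℕ → Fin 2 → ℂ := fun n => ![ψ (n+1), ψ n] with hwdef
  have hstep : ∀ n, w (n+1) = (M2 lam (K n)).mulVec (w n) := by
    intro n
    funext i
    fin_cases i
    · show ψ (n+2) = _
      simp [M2, Matrix.mulVec, dotProduct, Fin.sum_univ_two, hwdef]
      rw [hR n]; ring
    · show ψ (n+1) = _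
      simp [M2, Matrix.mulVec, dotProduct, Fin.sum_univ_two, hwdef]
  obtain ⟨r, hvr⟩ : ∃ r : Fin m, v r ≠ 0 := by
    by_contra h
    push_neg at h
    exact hv0 (funext fun r => h r)
  have hψr : ψ (r : ℕ) = v r := by
    show z ^ ((r:ℕ) / m) * v _ = v r
    simp [Nat.div_eq_of_lt r.isLt, Nat.mod_eq_of_lt r.isLt]
  -- products of K over a period
  have prodK : ∀ a, (∏ i ∈ Finset.range m, K (a + i)) = 1 := by
    have step : ∀ a, (∏ i ∈ Finset.range m, K ((a+1) + i)) = ∏ i ∈ Finset.range m, K (a + i) := by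
      intro a
      have h1 : (∏ i ∈ Finset.range (m+1), K (a + i))
          = (∏ i ∈ Finset.range m, K (a + (i+1))) * K (a + 0) := by
        exact Finset.prod_range_succ' (fun i => K (a + i)) m
      have h2 : (∏ i ∈ Finset.range (m+1), K (a + i))
          = (∏ i ∈ Finset.range m, K (a + i)) * K (a + m) := Finset.prod_range_succ _ m
      have h3 : (∏ i ∈ Finset.range m, K (a + (i+1))) = ∏ i ∈ Finset.range m, K ((a+1) + i) := by
        apply Finset.prod_congr rfl
        intro i _
        congr 1
        omega
      rw [h3] at h1
      have h4 := h1.symm.trans h2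
      rw [add_zero] at h4
      rw [hKper a] at h4
      exact mul_right_cancel₀ (hKne a) h4
    intro a
    induction a with
    | zero =>
        simp only [zero_add]
        calc (∏ i ∈ Finset.range m, K i) = ∏ i ∈ Finset.range m, k i := by
              apply Finset.prod_congr rfl
              intro i hi
              show k (i % m) = k i
              rw [Nat.mod_eq_of_lt (Finset.mem_range.1 hi)]
        _ = 1 := hprod
    | succ a ih => rw [step a, ih]
  -- trace
  set Δ : ℂ := (Qm lam K 0 m).trace with hΔdef
  have htr : ∀ a, (Qm lam K a m).trace = Δ := trace_Qm_const lam K m hKper hKne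
  -- Bloch relation : z^2 - Δ z + 1 = 0
  have hsc : z * z - Δ * z + 1 = 0 := by
    set X := Qm lam K (r : ℕ) m with hX
    have hXw : X.mulVec (w (r : ℕ)) = z • w (r : ℕ) := by
      have h1 := walk lam K w hstep (r : ℕ) m
      have h2 : w ((r : ℕ) + m) = z • w (r : ℕ) := by
        funext i
        fin_cases i
        · show ψ ((r:ℕ) + m + 1) = z * ψ ((r:ℕ)+1)
          rw [show (r:ℕ) + m + 1 = ((r:ℕ)+1) + m by omega, hψs]
        · show ψ ((r:ℕ) + m) = z * ψ (r:ℕ)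
          rw [hψs]
      rw [← h1, h2]
    have hdX : X.det = 1 := by rw [hX, det_Qm]; exact prodK (r : ℕ)
    have htX : X.trace = Δ := htr _
    have hCH := CH2 X
    have h3 : (X * X).mulVec (w (r:ℕ)) = (z * z) • w (r:ℕ) := by
      rw [← Matrix.mulVec_mulVec, hXw, Matrix.mulVec_smul, hXw, smul_smul]
    rw [hCH] at h3
    rw [Matrix.sub_mulVec, Matrix.smul_mulVec, Matrix.smul_mulVec,
      Matrix.one_mulVec, hXw, hdX, htX, smul_smul] at h3
    have h4 := congrFun h3 1
    have h5 : (w (r:ℕ)) 1 = v r := by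
      show ψ (r:ℕ) = v r
      exact hψr
    simp only [Pi.smul_apply, Pi.sub_apply, smul_eq_mul, h5, one_smul] at h4
    have h6 : (z * z - Δ * z + 1) * v r = 0 := by linear_combination -h4
    rcases mul_eq_zero.1 h6 with h | h
    · exact h
    · exact absurd h hvr
  have hΔcos : Δ = 2 * (Real.cos θ : ℂ) := by
    have hΔz : Δ * z = z * z + 1 := by linear_combination -hsc
    have hEzz : Complex.exp ((θ:ℂ) * Complex.I) * z = 1 := by
      rw [hzdef, ← Complex.exp_add]
      rw [show (θ:ℂ) * Complex.I + -(θ:ℂ) * Complex.I = 0 by ring]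
      exact Complex.exp_zero
    have hcz : (2 * (Real.cos θ : ℂ)) * z = z * z + 1 := by
      rw [Complex.ofReal_cos]
      show 2 * ((Complex.exp ((θ:ℂ) * Complex.I) + Complex.exp (-(θ:ℂ) * Complex.I)) / 2) * z
        = z * z + 1
      rw [← hzdef]
      linear_combination hEzz
    have := hΔz.trans hcz.symm
    exact mul_right_cancel₀ hzne this
  -- e-sequence
  set ce : ℕ → ℂ := fun n => K (n - 1) with hce
  set e : ℕ → ℂ := eseq lam ce with he
  set w' : ℕ → Fin 2 → ℂ := fun n => ![e (n+1), e n] with hw'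
  have hstep' : ∀ n, w' (n+1) = (M2 lam (ce n)).mulVec (w' n) := by
    intro n
    have := eseq_step lam ce n
    exact this
  have hw'0 : w' 0 = ![1, 0] := by
    funext i
    fin_cases i <;> rfl
  set S : Matrix (Fin 2) (Fin 2) ℂ := Qm lam K (m-1) m with hS
  have hperiod : ∀ j, w' ((j+1) * m) = S.mulVec (w' (j * m)) := by
    intro j
    obtain ⟨m', rfl⟩ : ∃ m', m = m' + 1 := ⟨m - 1, by omega⟩
    cases j with
    | zero =>
        have h1 := walk lam ce w' hstep' 0 (m'+1)
        rw [zero_add] at h1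
        rw [show (0+1) * (m'+1) = m'+1 by ring, show 0 * (m'+1) = 0 by ring]
        rw [h1, Qm_succ_left, hS]
        rw [show Qm lam ce (0+1) m' = Qm lam K 0 m' from
          Qm_congr lam ce K 1 0 m' (fun i _ => by show K (1 + i - 1) = K (0 + i); congr 1; omega)]
        rw [show (m'+1) - 1 = m' by omega]
        rw [Qm_succ_left lam K m' m']
        rw [show Qm lam K (m'+1) m' = Qm lam K 0 m' from
          Qm_congr lam K K (m'+1) 0 m' (fun i _ => by
            have : m' + 1 + i = (0 + i) + 1 * (m'+1) := by ring
            rw [this, hKperN])]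
        rw [← Matrix.mulVec_mulVec, ← Matrix.mulVec_mulVec, hw'0, M2_vec_10, M2_vec_10]
    | succ j' =>
        have hQ : Qm lam ce ((j'+1) * (m'+1)) (m'+1) = Qm lam K m' (m'+1) := by
          apply Qm_congr
          intro i _
          show K ((j'+1) * (m'+1) + i - 1) = K (m' + i)
          have hidx : (j'+1) * (m'+1) + i - 1 = (m' + i) + j' * (m'+1) := by
            have hexp : (j'+1) * (m'+1) = j' * (m'+1) + m' + 1 := by ring
            omega
          rw [hidx, hKperN]
        have h1 := walk lam ce w' hstep' ((j'+1) * (m'+1)) (m'+1)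
        rw [show (j'+1+1) * (m'+1) = (j'+1) * (m'+1) + (m'+1) by ring]
        rw [h1, hQ, hS, show (m'+1) - 1 = m' by omega]
  have hdetS : S.det = 1 := by rw [hS, det_Qm]; exact prodK (m-1)
  have htrS : S.trace = Δ := htr _
  have hw'c : ∀ n, (w' n) 1 = e n := fun n => rfl
  have hrec2 : ∀ j, e ((j+2) * m) = Δ * e ((j+1) * m) - e (j * m) := by
    intro j
    have h1 : w' ((j+2) * m) = (S * S).mulVec (w' (j * m)) := by
      rw [show j + 2 = (j+1) + 1 by ring, hperiod (j+1), hperiod j, Matrix.mulVec_mulVec]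
    rw [CH2 S, htrS, hdetS, one_smul, Matrix.sub_mulVec, Matrix.smul_mulVec] at h1
    have h2 := congrFun h1 1
    simp only [Pi.sub_apply, Pi.smul_apply, smul_eq_mul] at h2
    rw [hw'c, Matrix.one_mulVec] at h2
    rw [h2, ← hperiod j]
    rfl
  have hfac : ∀ j, e (j * m) = e m * eseq Δ (fun _ => 1) j := by
    have h0 : e (0 * m) = 0 := by rw [zero_mul]; rfl
    have := cheb_factor Δ (fun j => e (j * m)) h0 hrec2
    intro j
    have h1 := this j
    rw [h1, one_mul]
  have hθpos : 0 < θ := by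
    rw [hθ]
    have : (0:ℝ) < l := by exact_mod_cast hl0
    have : (0:ℝ) < N := by positivity
    positivity
  have hθlt : θ < Real.pi := by
    rw [hθ, mul_div_assoc]
    have hN0 : (0:ℝ) < N := by positivity
    have : (l:ℝ) / N < 1 := by
      rw [div_lt_one hN0]
      exact_mod_cast hlN
    nlinarith [Real.pi_pos]
  have hsinne : Real.sin θ ≠ 0 := ne_of_gt (Real.sin_pos_of_pos_of_lt_pi hθpos hθlt)
  have huN : eseq Δ (fun _ => 1) N = 0 := by
    have h1 := cheb_sin θ N
    have h2 : (N:ℝ) * θ = l * Real.pi := by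
      rw [hθ]
      field_simp
    rw [h2, Real.sin_nat_mul_pi] at h1
    rw [← hΔcos] at h1
    simp only [Complex.ofReal_zero] at h1
    rcases mul_eq_zero.1 h1 with h | h
    · exact h
    · exact absurd h (by exact_mod_cast hsinne)
  have heNm : e (N * m) = 0 := by rw [hfac N, huN, mul_zero]
  -- the finite matrix
  have hNm3 : 3 ≤ N * m := le_trans hN (by nlinarith)
  set n₀ : ℕ := N * m - 2 with hn₀
  have hn₀2 : n₀ + 2 = N * m := by omega
  have hn₀1 : 1 ≤ n₀ := by omega
  set x : Fin (n₀+1) → ℂ := fun i => e ((i : ℕ) + 1) with hx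
  have hx0 : x ≠ 0 := by
    intro h
    have := congrFun h ⟨0, by omega⟩
    have h1 : e 1 = 0 := this
    rw [he] at h1
    simp [eseq] at h1
  have he2 : ∀ n, 1 ≤ n → e (n+2) = lam * e (n+1) - K (n-1) * e n := fun n _ => rfl
  have hAx : (Afin n₀ K (fun _ => 1)).mulVec x = lam • x := by
    funext i
    have hrow : (Afin n₀ K (fun _ => 1)).mulVec x i
        = (∑ c : Fin (n₀+1), if (c:ℕ) = (i:ℕ) + 1 then x c else 0)
        + (∑ c : Fin (n₀+1), if (i:ℕ) = (c:ℕ) + 1 then K (c:ℕ) * x c else 0) := by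
      show (∑ c : Fin (n₀+1), Afin n₀ K (fun _ => 1) i c * x c) = _
      rw [← Finset.sum_add_distrib]
      apply Finset.sum_congr rfl
      intro c _
      show (if (c:ℕ) = (i:ℕ)+1 then (1:ℂ) else if (i:ℕ) = (c:ℕ)+1 then K (c:ℕ) else 0) * x c = _
      by_cases h1 : (c:ℕ) = (i:ℕ)+1
      · rw [if_pos h1, if_pos h1, if_neg (by omega), one_mul, add_zero]
      · rw [if_neg h1, if_neg h1, zero_add]
        by_cases h2 : (i:ℕ) = (c:ℕ)+1
        · rw [if_pos h2, if_pos h2]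
        · rw [if_neg h2, if_neg h2, zero_mul]
    rw [hrow]
    rcases Nat.lt_or_ge (i:ℕ) n₀ with hi | hi
    · rw [fin_sum_pin ((i:ℕ)+1) (by omega) x]
      rcases Nat.eq_zero_or_pos (i:ℕ) with hi0 | hi0
      · rw [Finset.sum_eq_zero (fun c _ => if_neg (by omega))]
        show x ⟨(i:ℕ)+1, _⟩ + 0 = lam * x i
        rw [hx]
        show e ((i:ℕ)+1+1) + 0 = lam * e ((i:ℕ)+1)
        rw [hi0]
        show e 2 + 0 = lam * e 1
        rw [he]
        show lam * eseq lam ce 1 - ce 0 * eseq lam ce 0 + 0 = lam * eseq lam ce 1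
        show lam * 1 - ce 0 * 0 + 0 = lam * 1
        ring
      · rw [show (∑ c : Fin (n₀+1), if (i:ℕ) = (c:ℕ) + 1 then K (c:ℕ) * x c else 0)
            = ∑ c : Fin (n₀+1), if (c:ℕ) = (i:ℕ) - 1 then K (c:ℕ) * x c else 0 from
          Finset.sum_congr rfl (fun c _ => if_congr (by omega) rfl rfl)]
        rw [fin_sum_pin ((i:ℕ)-1) (by omega)]
        show x ⟨(i:ℕ)+1, _⟩ + K ((i:ℕ)-1) * x ⟨(i:ℕ)-1, _⟩ = lam * x i
        rw [hx]
        show e ((i:ℕ)+1+1) + K ((i:ℕ)-1) * e (((i:ℕ)-1)+1) = lam * e ((i:ℕ)+1)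
        rw [show ((i:ℕ)-1)+1 = (i:ℕ) by omega]
        rw [he2 (i:ℕ) hi0]
        ring
    · -- last row
      have hieq : (i:ℕ) = n₀ := by omega
      rw [fin_sum_pin0 ((i:ℕ)+1) (by omega) x]
      rw [show (∑ c : Fin (n₀+1), if (i:ℕ) = (c:ℕ) + 1 then K (c:ℕ) * x c else 0)
          = ∑ c : Fin (n₀+1), if (c:ℕ) = (i:ℕ) - 1 then K (c:ℕ) * x c else 0 from
        Finset.sum_congr rfl (fun c _ => if_congr (by omega) rfl rfl)]
      rw [fin_sum_pin ((i:ℕ)-1) (by omega)]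
      show 0 + K ((i:ℕ)-1) * x ⟨(i:ℕ)-1, _⟩ = lam * x i
      rw [hx]
      show 0 + K ((i:ℕ)-1) * e (((i:ℕ)-1)+1) = lam * e ((i:ℕ)+1)
      rw [show ((i:ℕ)-1)+1 = (i:ℕ) by omega]
      have h3 := he2 (i:ℕ) (by omega)
      have h4 : e ((i:ℕ)+2) = 0 := by
        rw [show (i:ℕ)+2 = N * m by omega]
        exact heNm
      rw [h4] at h3
      linear_combination h3
  -- spectrum membership
  have hdet2 : (algebraMap ℂ (Matrix (Fin (n₀+1)) (Fin (n₀+1)) ℂ) lam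
      - Afin n₀ K (fun _ => 1)).det = 0 := by
    rw [← Matrix.exists_mulVec_eq_zero_iff]
    refine ⟨x, hx0, ?_⟩
    rw [Matrix.sub_mulVec, hAx, Algebra.algebraMap_eq_smul_one, Matrix.smul_mulVec,
      Matrix.one_mulVec, sub_self]
  refine ⟨n₀, hn₀1, K, fun _ => 1, fun i _ => hKsign i, fun i _ => Or.inl rfl, ?_⟩
  rw [spectrum.mem_iff]
  intro hU
  have := (Matrix.isUnit_iff_isUnit_det _).1 hU
  rw [hdet2] at this
  exact not_isUnit_zero this

end St15

lemma dense_angles : Set.Icc (0:ℝ) Real.pi ⊆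
    closure {θ : ℝ | ∃ N l : ℕ, 3 ≤ N ∧ 0 < l ∧ l < N ∧ θ = Real.pi * l / N} := by
  set D := {θ : ℝ | ∃ N l : ℕ, 3 ≤ N ∧ 0 < l ∧ l < N ∧ θ = Real.pi * l / N} with hD
  have hπ := Real.pi_pos
  have hsub : Set.Ioo (0:ℝ) Real.pi ⊆ closure D := by
    intro θ hθ
    rw [Metric.mem_closure_iff]
    intro ε hε
    have hδ : 0 < min ε (Real.pi - θ) := lt_min hε (by linarith [hθ.2])
    obtain ⟨N, hNgt⟩ := exists_nat_gt (max 3 (Real.pi / min ε (Real.pi - θ)))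
    have hN3 : 3 ≤ N := by
      have h1 : (3:ℝ) < N := lt_of_le_of_lt (le_max_left _ _) hNgt
      exact_mod_cast h1.le
    have hNpos : (0:ℝ) < N := by
      have : (3:ℝ) ≤ N := by exact_mod_cast hN3
      linarith
    have hπN : Real.pi / N < min ε (Real.pi - θ) := by
      rw [div_lt_iff₀ hNpos]
      have h2 : Real.pi / min ε (Real.pi - θ) < N := lt_of_le_of_lt (le_max_right _ _) hNgt
      rw [div_lt_iff₀ hδ] at h2
      nlinarith
    set t := θ * N / Real.pi with ht
    have htpos : 0 < t := div_pos (mul_pos hθ.1 hNpos) hπ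
    have hl1 : (⌊t⌋₊ : ℝ) ≤ t := Nat.floor_le htpos.le
    have hl2 : t < ⌊t⌋₊ + 1 := Nat.lt_floor_add_one t
    set l : ℕ := ⌊t⌋₊ + 1 with hl
    have hl0 : 0 < l := Nat.succ_pos _
    have htθ : t * Real.pi / N = θ := by
      rw [ht]; field_simp
    have htN : t < N - 1 := by
      have h3 : Real.pi / N < Real.pi - θ := lt_of_lt_of_le hπN (min_le_right _ _)
      have h4 : θ < Real.pi - Real.pi / N := by linarith
      rw [ht, div_lt_iff₀ hπ]
      rw [div_lt_iff₀ hNpos] at h3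
      nlinarith
    have hlN : l < N := by
      have h5 : (l : ℝ) < N := by
        rw [hl]; push_cast
        nlinarith
      exact_mod_cast h5
    refine ⟨Real.pi * l / N, ⟨N, l, hN3, hl0, hlN, rfl⟩, ?_⟩
    rw [Real.dist_eq, abs_lt]
    have hθval : θ = t * Real.pi / N := htθ.symm
    have hlmπ : Real.pi * l / N - θ ≤ Real.pi / N := by
      rw [hθval]
      rw [div_sub_div_same, div_le_div_iff₀ hNpos hNpos, hl]
      push_cast
      nlinarith [mul_nonneg (mul_nonneg hπ.le hNpos.le) (sub_nonneg.2 hl1)]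
    have hlmπ2 : 0 < Real.pi * l / N - θ := by
      rw [hθval, div_sub_div_same]
      apply div_pos _ hNpos
      rw [hl]
      push_cast
      nlinarith
    have hπNε : Real.pi / N < ε := lt_of_lt_of_le hπN (min_le_left _ _)
    constructor <;> linarith
  have h2 : Set.Icc (0:ℝ) Real.pi = closure (Set.Ioo 0 Real.pi) := (closure_Ioo (ne_of_lt hπ)).symm
  rw [h2]
  calc closure (Set.Ioo 0 Real.pi) ⊆ closure (closure D) := closure_mono hsub
  _ = closure D := closure_closure




/-- For every `m ≥ 1` and `k ∈ {±1}^m` with `∏ kⱼ = 1`, with `p` the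
polynomial satisfying `det(a^k(φ) − λI) = (−1)^m (p(λ) − 2cos φ)`, the set `p⁻¹([−2,2])`
(i.e. the spectrum of the periodic operator `A^k_per`) is contained in the closure of `σ∞`. -/
theorem preimage_Icc_subset_closure_sigmaInf
    (m : ℕ) (hm : 1 ≤ m) (k : ℕ → ℂ) (hk : ∀ i < m, k i = 1 ∨ k i = -1)
    (hprod : ∏ j ∈ Finset.range m, k j = 1)
    (p : Polynomial ℂ) (hpdeg : p.natDegree = m)
    (hdet : ∀ (φ : ℝ) (lam : ℂ),
      (symb m k φ - lam • 1).det = (-1) ^ m * (p.eval lam - 2 * Real.cos φ)) :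
    {lam : ℂ | ∃ x ∈ Set.Icc (-2 : ℝ) 2, p.eval lam = (x : ℂ)} ⊆ closure sigmaInf := by
  intro lam hlam
  obtain ⟨x, hx, hpx⟩ := hlam
  rw [mem_closure_iff]
  intro O hO hlamO
  have han : AnalyticAt ℂ (fun w => p.eval w) lam :=
    (Polynomial.differentiable p).analyticAt lam
  have hnc : ¬ (∀ᶠ w in nhds lam, p.eval w = p.eval lam) := by
    intro hconst
    have hsub : {w : ℂ | p.eval w = p.eval lam} ∈ nhds lam := hconst
    have hinf : {w : ℂ | p.eval w = p.eval lam}.Infinite := infinite_of_mem_nhds lam hsub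
    have hroots : {w : ℂ | (p - Polynomial.C (p.eval lam)).IsRoot w}.Infinite := by
      apply hinf.mono
      intro w hw
      simp only [Set.mem_setOf_eq, Polynomial.IsRoot, Polynomial.eval_sub, Polynomial.eval_C]
      rw [hw, sub_self]
    have h0 := Polynomial.eq_zero_of_infinite_isRoot _ hroots
    have hpC : p = Polynomial.C (p.eval lam) := by rwa [sub_eq_zero] at h0
    have hdeg0 : p.natDegree = 0 := by rw [hpC, Polynomial.natDegree_C]
    omega
  have hmap := han.eventually_constant_or_nhds_le_map_nhds.resolve_left hnc
  have hOn : O ∈ nhds lam := hO.mem_nhds hlamO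
  have himg : (fun w => p.eval w) '' O ∈ nhds (p.eval lam) := hmap (Filter.image_mem_map hOn)
  set θ0 := Real.arccos (x/2) with hθ0
  have hcosθ0 : Real.cos θ0 = x/2 :=
    Real.cos_arccos (by linarith [hx.1]) (by linarith [hx.2])
  have hθ0mem : θ0 ∈ Set.Icc 0 Real.pi := ⟨Real.arccos_nonneg _, Real.arccos_le_pi _⟩
  have hdense := dense_angles hθ0mem
  set g : ℝ → ℂ := fun t => ((2 * Real.cos t : ℝ) : ℂ) with hg
  have hgc : Continuous g := Complex.continuous_ofReal.comp
    (continuous_const.mul Real.continuous_cos)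
  have hgθ0 : g θ0 = p.eval lam := by
    rw [hpx, hg]
    simp only
    rw [hcosθ0]
    push_cast
    ring
  have hpre : g ⁻¹' ((fun w => p.eval w) '' O) ∈ nhds θ0 :=
    hgc.continuousAt.preimage_mem_nhds (by rw [hgθ0]; exact himg)
  obtain ⟨θ', hθ'1, hθ'2⟩ := mem_closure_iff_nhds.1 hdense _ hpre
  obtain ⟨N, l, hN3, hl0, hlN, hθ'eq⟩ := hθ'2
  obtain ⟨lam', hlam'O, heval⟩ := hθ'1
  have heval' : Polynomial.eval lam' p = g θ' := heval
  have hdet0 : (symb m k θ' - lam' • 1).det = 0 := by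
    rw [hdet θ' lam', heval', hg]
    simp only
    push_cast
    ring
  rw [hθ'eq] at hdet0
  exact ⟨lam', hlam'O, St15.mem_sigmaInf m (by omega) k hk hprod N l hN3 hl0 hlN lam' hdet0⟩
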